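/- Let f : ℕ → ℕ. Suppose that for every domain X' and every binary concept class H ⊆ {0,1}^{X'} with finite VC dimension d, there exists a stable exact realizable sample compression scheme for H of size at most f(d). Then for every multiclass concept class C ⊆ Y^X with finite label set Y and finite graph dimension d_G, there exists a stable exact realizable sample compression scheme for C of size at most f(d_G). -/

import Mathlib

universe u v

/-- A finite sample `S` is realizable by the concept class `C`. -/
def Realizable {X Y : Type*} (C : Set (X → Y)) (S : List (X × Y)) : Prop :=
  ∃ c ∈ C, ∀ p ∈ S, c p.1 = p.2

/-- `(κ, ρ)` is an exact realizable sample compression scheme for `C` of size at most `k`. -/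
def IsExactRealizableScheme {X Y : Type*} (C : Set (X → Y)) (k : ℕ)
    (κ : List (X × Y) → List (X × Y) × List Bool)
    (ρ : List (X × Y) × List Bool → X → Y) : Prop :=
  (∀ S : List (X × Y), (κ S).1 ⊆ S) ∧
  (∀ S : List (X × Y), Realizable C S → (κ S).1.length + (κ S).2.length ≤ k) ∧
  (∀ S : List (X × Y), Realizable C S → ∀ p ∈ S, ρ (κ S) p.1 = p.2)

/-- A compression function is stable: for every realizable `S` and every `T` with
`κ S ⊆ T ⊆ S` (containment of the underlying sets of examples), `κ T = κ S`. -/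
def IsStable {X Y : Type*} (C : Set (X → Y))
    (κ : List (X × Y) → List (X × Y) × List Bool) : Prop :=
  ∀ S T : List (X × Y), Realizable C S → (κ S).1 ⊆ T → T ⊆ S → κ T = κ S

/-- `n` points of `X` are shattered by the binary concept class `H ⊆ {0,1}^X`. -/
def ShattersN {X : Type*} (H : Set (X → Bool)) (n : ℕ) : Prop :=
  ∃ x : Fin n → X, ∀ b : Fin n → Bool, ∃ h ∈ H, ∀ i, h (x i) = b i

/-- `H` has (finite) VC dimension exactly `d`. -/
def IsVCDim {X : Type*} (H : Set (X → Bool)) (d : ℕ) : Prop :=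
  ShattersN H d ∧ ¬ ShattersN H (d + 1)

/-- `n` points of `X` are G-shattered by the multiclass concept class `C ⊆ Y^X`. -/
def GShattersN {X Y : Type*} (C : Set (X → Y)) (n : ℕ) : Prop :=
  ∃ (x : Fin n → X) (y : Fin n → Y),
    ∀ b : Fin n → Bool, ∃ c ∈ C, ∀ i, (c (x i) = y i ↔ b i = true)

/-- `C` has (finite) graph dimension exactly `d`. -/
def IsGraphDim {X Y : Type*} (C : Set (X → Y)) (d : ℕ) : Prop :=
  GShattersN C d ∧ ¬ GShattersN C (d + 1)


set_option linter.unusedSectionVars false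

section Aux

variable {X : Type u} {Y : Type v} [Fintype Y] [DecidableEq X] [DecidableEq Y]

/-- The binary "graph class" of a multiclass concept class. -/
def liftClass (C : Set (X → Y)) : Set (X × Y → Bool) :=
  {h | ∃ c ∈ C, h = fun q => decide (c q.1 = q.2)}

/-- Blow up a multiclass sample into a binary sample over all labels. -/
noncomputable def fullSample (S : List (X × Y)) : List ((X × Y) × Bool) :=
  S.flatMap (fun p => (Finset.univ : Finset Y).toList.map
    (fun y' => ((p.1, y'), decide (y' = p.2))))

def labelPair (c₀ : X → Y) (S : List (X × Y)) (x : X) : X × Y :=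
  (S.find? (fun p => p.1 = x)).getD (x, c₀ x)

lemma mem_fullSample {S : List (X × Y)} {q : (X × Y) × Bool} :
    q ∈ fullSample S ↔ ∃ p ∈ S, ∃ y' : Y, q = ((p.1, y'), decide (y' = p.2)) := by
  simp [fullSample, eq_comm]

lemma fullSample_subset {S T : List (X × Y)} (h : S ⊆ T) :
    fullSample S ⊆ fullSample T := by
  intro q hq
  rw [mem_fullSample] at hq ⊢
  obtain ⟨p, hp, y', rfl⟩ := hq
  exact ⟨p, h hp, y', rfl⟩

lemma labelPair_spec (c₀ : X → Y) {S : List (X × Y)} {x : X} (h : ∃ p ∈ S, p.1 = x) :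
    labelPair c₀ S x ∈ S ∧ (labelPair c₀ S x).1 = x := by
  obtain ⟨p, hp, hpx⟩ := h
  have hs : (S.find? (fun p => p.1 = x)).isSome = true := by
    rw [List.find?_isSome]
    exact ⟨p, hp, by simp [hpx]⟩
  obtain ⟨p', hp'⟩ := Option.isSome_iff_exists.mp hs
  have h1 := List.mem_of_find?_eq_some hp'
  have h2 := List.find?_some hp'
  simp only [decide_eq_true_eq] at h2
  simp only [labelPair, hp', Option.getD_some]
  exact ⟨h1, h2⟩

lemma labelPair_real {c : X → Y} {S : List (X × Y)} (hc : ∀ p ∈ S, c p.1 = p.2)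
    {p : X × Y} (hp : p ∈ S) (c₀ : X → Y) :
    labelPair c₀ S p.1 = p := by
  obtain ⟨h1, h2⟩ := labelPair_spec c₀ (S := S) (x := p.1) ⟨p, hp, rfl⟩
  have e1 := hc _ h1
  have e2 := hc _ hp
  refine Prod.ext h2 ?_
  rw [← e1, h2, e2]

lemma realizable_full {C : Set (X → Y)} {S : List (X × Y)} (h : Realizable C S) :
    Realizable (liftClass C) (fullSample S) := by
  obtain ⟨c, hcC, hc⟩ := h
  refine ⟨fun q => decide (c q.1 = q.2), ⟨c, hcC, rfl⟩, ?_⟩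
  intro q hq
  rw [mem_fullSample] at hq
  obtain ⟨p, hp, y', rfl⟩ := hq
  simp [hc p hp, eq_comm]

lemma shatters_lift {C : Set (X → Y)} {n : ℕ} :
    ShattersN (liftClass C) n ↔ GShattersN C n := by
  constructor
  · rintro ⟨x', hx'⟩
    refine ⟨fun i => (x' i).1, fun i => (x' i).2, fun b => ?_⟩
    obtain ⟨h, ⟨c, hcC, rfl⟩, hhb⟩ := hx' b
    refine ⟨c, hcC, fun i => ?_⟩
    rw [← hhb i, decide_eq_true_eq]
  · rintro ⟨x, y, hx⟩
    refine ⟨fun i => (x i, y i), fun b => ?_⟩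
    obtain ⟨c, hcC, hcb⟩ := hx b
    refine ⟨fun q => decide (c q.1 = q.2), ⟨c, hcC, rfl⟩, fun i => ?_⟩
    have := hcb i
    cases hb : b i <;> rw [hb] at this <;> simp_all

end Aux

/-- Multiclass reduction with stable binary compression: if every binary class of
finite VC dimension `d` has a stable exact realizable compression scheme of size at
most `f d`, then every multiclass class with finite label set and finite graph
dimension `d_G` admits a stable exact realizable compression scheme of size at most
`f d_G`. -/
theorem multiclass_stable_compression_of_binary {X : Type u} {Y : Type v} [Fintype Y]
    (f : ℕ → ℕ)
    (hbin : ∀ (X' : Type (max u v)) (H : Set (X' → Bool)) (d : ℕ), IsVCDim H d →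
      ∃ κ ρ, IsExactRealizableScheme H (f d) κ ρ ∧ IsStable H κ)
    (C : Set (X → Y)) (dG : ℕ) (hC : IsGraphDim C dG) :
    ∃ κ ρ, IsExactRealizableScheme C (f dG) κ ρ ∧ IsStable C κ := by
  classical
  obtain ⟨c₀, hc₀C, -⟩ := hC.1.choose_spec.choose_spec (fun _ => true)
  have hVC : IsVCDim (liftClass C) dG :=
    ⟨shatters_lift.mpr hC.1, fun h => hC.2 (shatters_lift.mp h)⟩
  obtain ⟨κb, ρb, ⟨hsub, hsize, hcorr⟩, hstab⟩ := hbin (X × Y) (liftClass C) dG hVC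
  -- membership structure of the binary compression set
  have keyR : ∀ (S : List (X × Y)) (c : X → Y), (∀ p ∈ S, c p.1 = p.2) →
      ∀ q ∈ (κb (fullSample S)).1, ∃ p ∈ S,
        (∃ y' : Y, q = ((p.1, y'), decide (y' = p.2))) ∧ labelPair c₀ S q.1.1 = p := by
    intro S c hc q hq
    have hqf : q ∈ fullSample S := hsub _ hq
    rw [mem_fullSample] at hqf
    obtain ⟨p, hp, y', rfl⟩ := hqf
    exact ⟨p, hp, ⟨y', rfl⟩, labelPair_real hc hp c₀⟩
  refine ⟨fun S => (((κb (fullSample S)).1).map (fun q => labelPair c₀ S q.1.1),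
      (κb (fullSample S)).2),
    fun Lb x => if h : ∃ y, ρb (κb (fullSample Lb.1)) (x, y) = true then h.choose else c₀ x,
    ⟨?_, ?_, ?_⟩, ?_⟩
  · -- compression set is a subset of the sample
    intro S q hq
    obtain ⟨q', hq', rfl⟩ := List.mem_map.mp hq
    have hqf : q' ∈ fullSample S := hsub _ hq'
    rw [mem_fullSample] at hqf
    obtain ⟨p, hp, y', rfl⟩ := hqf
    exact (labelPair_spec c₀ ⟨p, hp, rfl⟩).1
  · -- size bound
    intro S hS
    simpa using hsize _ (realizable_full hS)
  · -- correctness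
    intro S hS p hp
    obtain ⟨c, hcC, hc⟩ := hS
    have hrf : Realizable (liftClass C) (fullSample S) := realizable_full ⟨c, hcC, hc⟩
    set L : List (X × Y) := ((κb (fullSample S)).1).map (fun q => labelPair c₀ S q.1.1)
      with hLdef
    have h1 : (κb (fullSample S)).1 ⊆ fullSample L := by
      intro q hq
      obtain ⟨p', hp', ⟨y', hqe⟩, hlp⟩ := keyR S c hc q hq
      rw [mem_fullSample]
      exact ⟨p', hLdef ▸ (hlp ▸ List.mem_map.mpr ⟨q, hq, rfl⟩), y', hqe⟩
    have h2 : fullSample L ⊆ fullSample S := by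
      refine fullSample_subset ?_
      intro q hq
      obtain ⟨q', hq', rfl⟩ := List.mem_map.mp hq
      obtain ⟨p', hp', -, hlp⟩ := keyR S c hc q' hq'
      exact hlp ▸ hp'
    have hstabeq : κb (fullSample L) = κb (fullSample S) := hstab _ _ hrf h1 h2
    have hex : ρb (κb (fullSample L)) (p.1, p.2) = true := by
      rw [hstabeq]
      have hm : ((p.1, p.2), decide (p.2 = p.2)) ∈ fullSample S :=
        mem_fullSample.mpr ⟨p, hp, p.2, rfl⟩
      have := hcorr (fullSample S) hrf _ hm
      simpa using this
    have hEx : ∃ y, ρb (κb (fullSample L)) (p.1, y) = true := ⟨p.2, hex⟩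
    simp only [dif_pos hEx]
    have huniq : ∀ y, ρb (κb (fullSample L)) (p.1, y) = true → y = p.2 := by
      intro y hy
      rw [hstabeq] at hy
      have := hcorr (fullSample S) hrf _ (mem_fullSample.mpr ⟨p, hp, y, rfl⟩)
      simp only at this
      rw [hy] at this
      exact of_decide_eq_true this.symm
    split_ifs with h
    · exact huniq _ h.choose_spec
    · exact absurd hEx h
  · -- stability
    intro S T hS hκT hTS
    obtain ⟨c, hcC, hc⟩ := hS
    have hcT : ∀ p ∈ T, c p.1 = p.2 := fun p hp => hc p (hTS hp)
    have hmemT : ∀ q ∈ (κb (fullSample S)).1, labelPair c₀ S q.1.1 ∈ T := by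
      intro q hq
      exact hκT (List.mem_map.mpr ⟨q, hq, rfl⟩)
    have h1 : (κb (fullSample S)).1 ⊆ fullSample T := by
      intro q hq
      obtain ⟨p', hp', ⟨y', hqe⟩, hlp⟩ := keyR S c hc q hq
      rw [mem_fullSample]
      exact ⟨p', hlp ▸ hmemT q hq, y', hqe⟩
    have h2 : fullSample T ⊆ fullSample S := fullSample_subset hTS
    have heq : κb (fullSample T) = κb (fullSample S) :=
      hstab _ _ (realizable_full ⟨c, hcC, hc⟩) h1 h2
    simp only [heq]
    refine Prod.ext ?_ rfl
    refine List.map_congr_left ?_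
    intro q hq
    obtain ⟨p', hp', ⟨y', hqe⟩, hlp⟩ := keyR S c hc q hq
    have hpT : p' ∈ T := hlp ▸ hmemT q hq
    subst hqe
    simp only
    rw [hlp, labelPair_real hcT hpT c₀]
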